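/- Let (q_n) be a strictly increasing sequence of positive reals with q_{n+1} - q_n → ∞ and ε > 0. Then there exists a strictly increasing sequence (q̃_n) of positive reals such that: (i) q̃_{n+1} ≤ (1+ε) q̃_n for all n, (ii) q̃_{n+1} - q̃_n → ∞, and (iii) the original sequence (q_n) is a subsequence of (q̃_n). -/

import Mathlib

open Filter

/-- Block/offset index function: walks through blocks of sizes `k 0, k 1, …`. -/
def stmt3Idx (k : ℕ → ℕ) : ℕ → ℕ × ℕ
  | 0 => (0, 0)
  | m + 1 =>
      if (stmt3Idx k m).2 + 1 < k (stmt3Idx k m).1 then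
        ((stmt3Idx k m).1, (stmt3Idx k m).2 + 1)
      else ((stmt3Idx k m).1 + 1, 0)

theorem stmt3 (q : ℕ → ℝ) (hmono : StrictMono q) (hpos : ∀ n, 0 < q n)
    (hgap : Tendsto (fun n => q (n + 1) - q n) atTop atTop)
    (ε : ℝ) (hε : 0 < ε) :
    ∃ qt : ℕ → ℝ, StrictMono qt ∧ (∀ n, 0 < qt n) ∧
      (∀ n, qt (n + 1) ≤ (1 + ε) * qt n) ∧
      Tendsto (fun n => qt (n + 1) - qt n) atTop atTop ∧
      ∃ φ : ℕ → ℕ, StrictMono φ ∧ ∀ n, q n = qt (φ n) := by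
  set D : ℕ → ℝ := fun n => q (n + 1) - q n with hD
  have hDpos : ∀ n, 0 < D n := fun n => sub_pos.2 (hmono (Nat.lt_succ_self n))
  set k : ℕ → ℕ := fun n => ⌈D n / (ε * q n)⌉₊ with hkdef
  have hapos : ∀ n, 0 < ε * q n := fun n => mul_pos hε (hpos n)
  have hk1 : ∀ n, 1 ≤ k n := fun n =>
    Nat.ceil_pos.2 (div_pos (hDpos n) (hapos n))
  have hkpos : ∀ n, (0 : ℝ) < (k n : ℝ) := fun n => by exact_mod_cast hk1 n
  set s : ℕ → ℝ := fun n => D n / (k n : ℝ) with hs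
  have hspos : ∀ n, 0 < s n := fun n => div_pos (hDpos n) (hkpos n)
  have hsle : ∀ n, s n ≤ ε * q n := by
    intro n
    rw [hs, div_le_iff₀ (hkpos n)]
    calc D n = (D n / (ε * q n)) * (ε * q n) :=
          (div_mul_cancel₀ _ (ne_of_gt (hapos n))).symm
      _ ≤ (k n : ℝ) * (ε * q n) :=
          mul_le_mul_of_nonneg_right (Nat.le_ceil _) (le_of_lt (hapos n))
      _ = ε * q n * (k n : ℝ) := by ring
  have hsum : ∀ n, q n + (k n : ℝ) * s n = q (n + 1) := by
    intro n
    rw [hs, mul_div_cancel₀ _ (ne_of_gt (hkpos n))]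
    simp [hD]
  set f : ℕ → ℕ × ℕ := stmt3Idx k with hf
  have hf0 : f 0 = (0, 0) := rfl
  have hfsucc : ∀ m, f (m + 1) =
      if (f m).2 + 1 < k (f m).1 then ((f m).1, (f m).2 + 1)
      else ((f m).1 + 1, 0) := fun m => rfl
  have hinv : ∀ m, (f m).2 < k (f m).1 := by
    intro m
    induction m with
    | zero => simpa [hf0] using Nat.lt_of_lt_of_le Nat.zero_lt_one (hk1 0)
    | succ m ih =>
        rw [hfsucc m]
        split
        · simpa using ‹(f m).2 + 1 < k (f m).1›
        · simpa using Nat.lt_of_lt_of_le Nat.zero_lt_one (hk1 ((f m).1 + 1))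
  set qt : ℕ → ℝ := fun m => q (f m).1 + ((f m).2 : ℝ) * s (f m).1 with hqt
  have hstep : ∀ m, qt (m + 1) = qt m + s (f m).1 := by
    intro m
    rw [hqt]
    simp only
    rw [hfsucc m]
    split
    · push_cast; ring
    · rename_i h
      have heq : (f m).2 + 1 = k (f m).1 := le_antisymm (hinv m) (not_lt.1 h)
      simp only
      rw [← hsum (f m).1, ← heq]
      push_cast; ring
  have hqtpos : ∀ m, 0 < qt m := by
    intro m
    have h1 : (0:ℝ) ≤ ((f m).2 : ℝ) * s (f m).1 :=
      mul_nonneg (Nat.cast_nonneg _) (le_of_lt (hspos _))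
    have h2 := hpos (f m).1
    rw [hqt]; positivity
  have hqtge : ∀ m, q (f m).1 ≤ qt m := fun m =>
    le_add_of_nonneg_right (mul_nonneg (Nat.cast_nonneg _) (le_of_lt (hspos _)))
  have hqtmono : StrictMono qt := by
    apply strictMono_nat_of_lt_succ
    intro m
    rw [hstep m]
    linarith [hspos (f m).1]
  have hratio : ∀ m, qt (m + 1) ≤ (1 + ε) * qt m := by
    intro m
    rw [hstep m]
    have h1 : s (f m).1 ≤ ε * q (f m).1 := hsle _
    have h2 : q (f m).1 ≤ qt m := hqtge m
    nlinarith [hqtpos m]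
  set φ : ℕ → ℕ := fun n => ∑ i ∈ Finset.range n, k i with hφ
  have hφsucc : ∀ n, φ (n + 1) = φ n + k n := fun n => Finset.sum_range_succ k n
  have hφmono : StrictMono φ := by
    apply strictMono_nat_of_lt_succ
    intro n
    rw [hφsucc n]
    have := hk1 n
    omega
  have hfφ : ∀ n, f (φ n) = (n, 0) := by
    intro n
    induction n with
    | zero => simpa [hφ] using hf0
    | succ n ih =>
        have hmid : ∀ r, r < k n → f (φ n + r) = (n, r) := by
          intro r hr
          induction r with
          | zero => simpa using ih
          | succ r ihr =>
              have hr' : r < k n := Nat.lt_of_succ_lt hr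
              have : f (φ n + r + 1) = (n, r + 1) := by
                rw [hfsucc, ihr hr']
                simp [hr]
              simpa [Nat.add_assoc] using this
        have hlast : f (φ n + (k n - 1)) = (n, k n - 1) :=
          hmid _ (by have := hk1 n; omega)
        have hnext : f (φ n + (k n - 1) + 1) = (n + 1, 0) := by
          rw [hfsucc, hlast]
          have := hk1 n
          have hnotlt : ¬ (k n - 1 + 1 < k n) := by omega
          simp [hnotlt]
        rw [hφsucc]
        have hk := hk1 n
        have heq : φ n + (k n - 1) + 1 = φ n + k n := by omega
        rw [← heq]
        exact hnext
  have hsub : ∀ n, q n = qt (φ n) := by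
    intro n
    rw [hqt]
    simp [hfφ n]
  -- q tends to infinity
  have hqtop : Tendsto q atTop atTop := by
    have h1 : ∀ᶠ n in atTop, (1:ℝ) ≤ D n := hgap.eventually_ge_atTop 1
    obtain ⟨N, hN⟩ := eventually_atTop.1 h1
    have key : ∀ n, N ≤ n → (n : ℝ) + (q N - N) ≤ q n := by
      intro n hn
      induction n with
      | zero =>
          have : N = 0 := Nat.le_zero.1 hn
          subst this; simp
      | succ n ihn =>
          rcases Nat.lt_or_ge N (n + 1) with h | h
          · have hn' : N ≤ n := by omega
            have hd := hN n hn'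
            have hDn : D n = q (n+1) - q n := rfl
            have := ihn hn'
            push_cast
            nlinarith
          · have : N = n + 1 := by omega
            subst this; simp
    have htend : Tendsto (fun n : ℕ => (n : ℝ) + (q N - N)) atTop atTop :=
      tendsto_atTop_add_const_right atTop _ tendsto_natCast_atTop_atTop
    apply tendsto_atTop_mono' atTop _ htend
    filter_upwards [eventually_ge_atTop N] with n hn
    exact key n hn
  have hεq : Tendsto (fun n => ε * q n) atTop atTop :=
    Tendsto.const_mul_atTop hε hqtop
  -- s tends to infinity
  have hstop : Tendsto s atTop atTop := by
    rw [tendsto_atTop]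
    intro C
    rcases le_or_gt C 0 with hC | hC
    · exact Eventually.of_forall fun n => le_trans hC (le_of_lt (hspos n))
    · filter_upwards [hεq.eventually_ge_atTop (2*C), hgap.eventually_ge_atTop (2*C)]
        with n h1 h2
      have h2' : 2*C ≤ D n := h2
      have hkle : (k n : ℝ) < D n / (ε * q n) + 1 :=
        Nat.ceil_lt_add_one (le_of_lt (div_pos (hDpos n) (hapos n)))
      have hklea : (k n : ℝ) * (ε * q n) < D n + (ε * q n) := by
        have h := mul_lt_mul_of_pos_right hkle (hapos n)
        rwa [add_mul, one_mul, div_mul_cancel₀ _ (ne_of_gt (hapos n))] at h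
      rw [hs, le_div_iff₀ (hkpos n)]
      have e1 : (ε * q n - 2*C) * D n ≥ 0 :=
        mul_nonneg (by linarith) (le_of_lt (hDpos n))
      have e2 : (D n - 2*C) * (ε * q n) ≥ 0 :=
        mul_nonneg (by linarith) (le_of_lt (hapos n))
      have e3 : C * ((k n : ℝ) * (ε * q n)) < C * (D n + ε * q n) :=
        mul_lt_mul_of_pos_left hklea hC
      nlinarith [hapos n, hDpos n, mul_pos hC (hkpos n)]
  -- block index tends to infinity
  have hgmono : Monotone (fun m => (f m).1) := by
    apply monotone_nat_of_le_succ
    intro m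
    rw [hfsucc m]
    split <;> simp
  have hgtop : Tendsto (fun m => (f m).1) atTop atTop := by
    apply tendsto_atTop_atTop.2
    intro b
    refine ⟨φ b, fun a ha => ?_⟩
    have := hgmono ha
    simpa [hfφ b] using this
  have hgaptend : Tendsto (fun m => qt (m + 1) - qt m) atTop atTop := by
    have : (fun m => qt (m + 1) - qt m) = fun m => s (f m).1 := by
      funext m
      rw [hstep m]; ring
    rw [this]
    exact hstop.comp hgtop
  exact ⟨qt, hqtmono, hqtpos, hratio, hgaptend, φ, hφmono, hsub⟩
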